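/- Let K be a nonmetrizable compact Hausdorff space. Then there exists an uncountable family 𝓕 of continuous functions K → [0,1] such that for every uncountable 𝓕' ⊆ 𝓕 and every infinite 𝓕'' ⊆ 𝓕', for every natural number n there exist f1,...,fn ∈ 𝓕'' and points x1,...,x_{n+1} ∈ K such that for all 1 ≤ j < j' ≤ n+1 there is k ≤ n with |f_k(x_j) − f_k(x_{j'})| ≥ 1/2. -/

import Mathlib

open Set TopologicalSpace

lemma stmt9_exists_pair {K : Type*} [TopologicalSpace K] [CompactSpace K] [T2Space K]
    (hK : ¬ TopologicalSpace.MetrizableSpace K)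
    {ι' : Type*} [Countable ι'] (f : ι' → C(K, ℝ)) :
    ∃ x y : K, x ≠ y ∧ ∀ j, f j x = f j y := by
  by_contra h
  push_neg at h
  apply hK
  have hF : Continuous (fun x : K => fun j : ι' => f j x) :=
    continuous_pi fun j => (f j).continuous
  have hinj : Function.Injective (fun x : K => fun j : ι' => f j x) := by
    intro x y hxy
    by_contra hne
    obtain ⟨j, hj⟩ := h x y hne
    exact hj (congrFun hxy j)
  exact (hF.isClosedEmbedding hinj).toIsEmbedding.metrizableSpace

lemma stmt9_key_step {K : Type*} [TopologicalSpace K] [CompactSpace K] [T2Space K]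
    (hK : ¬ TopologicalSpace.MetrizableSpace K)
    (i : (Cardinal.aleph.{0} 1).ord.ToType)
    (prev : ∀ j, j < i → C(K, ℝ) × K × K) :
    ∃ p : C(K, ℝ) × K × K, p.1 p.2.1 = 0 ∧ p.1 p.2.2 = 1 ∧
      (∀ z, p.1 z ∈ Icc (0:ℝ) 1) ∧ ∀ j (h : j < i), (prev j h).1 p.2.1 = (prev j h).1 p.2.2 := by
  have hcnt : (Set.Iio i).Countable :=
    (Cardinal.countable_iff_lt_aleph_one _).2 (Cardinal.mk_Iio_ord_toType i)
  haveI := hcnt.to_subtype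
  obtain ⟨x, y, hxy, heq⟩ := stmt9_exists_pair hK (fun j : Set.Iio i => (prev j j.2).1)
  obtain ⟨f, hf0, hf1, hf01⟩ := exists_continuous_zero_one_of_isClosed
    (isClosed_singleton (x := x)) (isClosed_singleton (x := y))
    (Set.disjoint_singleton.2 hxy)
  exact ⟨(f, x, y), hf0 rfl, hf1 rfl, hf01, fun j h => heq ⟨j, h⟩⟩

lemma stmt9_construct {K : Type*} [TopologicalSpace K] [CompactSpace K] [T2Space K]
    (hK : ¬ TopologicalSpace.MetrizableSpace K) :
    ∃ (f : (Cardinal.aleph.{0} 1).ord.ToType → C(K, ℝ))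
      (x y : (Cardinal.aleph.{0} 1).ord.ToType → K),
      ∀ i, f i (x i) = 0 ∧ f i (y i) = 1 ∧ (∀ z, f i z ∈ Icc (0:ℝ) 1) ∧
        ∀ j, j < i → f j (x i) = f j (y i) := by
  set T := (Cardinal.aleph.{0} 1).ord.ToType with hT
  have wf : WellFounded ((· < ·) : T → T → Prop) := IsWellFounded.wf
  let g : T → C(K, ℝ) × K × K :=
    wf.fix (fun i prev => Classical.choose (stmt9_key_step hK i prev))
  have hg : ∀ i, g i = Classical.choose (stmt9_key_step hK i (fun j _ => g j)) := fun i =>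
    wf.fix_eq _ i
  refine ⟨fun i => (g i).1, fun i => (g i).2.1, fun i => (g i).2.2, fun i => ?_⟩
  have := Classical.choose_spec (stmt9_key_step hK i (fun j _ => g j))
  rw [← hg i] at this
  exact ⟨this.1, this.2.1, this.2.2.1, fun j hj => this.2.2.2 j hj⟩

lemma stmt9_select {ι : Type*} [LinearOrder ι] [WellFoundedLT ι]
    (c : ι → ι → Prop) :
    ∀ (n : ℕ) (A : Set ι), A.Infinite →
    ∃ (a : Fin n → ι) (s : Fin n → Bool) (B : Set ι),
      B ⊆ A ∧ B.Infinite ∧ (∀ k, a k ∈ A) ∧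
      (∀ k k', k < k' → a k < a k') ∧
      (∀ k, ∀ b ∈ B, a k < b) ∧
      (∀ k k', k < k' → (c (a k) (a k') ↔ s k = true)) ∧
      (∀ k, ∀ b ∈ B, (c (a k) b ↔ s k = true)) := by
  intro n
  induction n with
  | zero =>
    intro A hA
    exact ⟨Fin.elim0, Fin.elim0, A, subset_rfl, hA, fun k => k.elim0, fun k => k.elim0,
      fun k => k.elim0, fun k => k.elim0, fun k => k.elim0⟩
  | succ n ih =>
    intro A hA
    obtain ⟨a, s, B, hBA, hBinf, haA, hmono, haB, hcs, hcB⟩ := ih A hA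
    have hne : B.Nonempty := hBinf.nonempty
    have wf : WellFounded ((· < ·) : ι → ι → Prop) := IsWellFounded.wf
    set α := wf.min B hne with hα
    have hαB : α ∈ B := wf.min_mem B hne
    have hB' : ∀ b ∈ B \ {α}, α < b := by
      intro b hb
      rcases lt_or_eq_of_le (not_lt.1 (wf.not_lt_min B hb.1)) with h | h
      · exact h
      · exact absurd h.symm hb.2
    have hB'inf : (B \ {α}).Infinite := hBinf.diff (Set.finite_singleton α)
    have hsplit : ({b ∈ B \ {α} | c α b}).Infinite ∨ ({b ∈ B \ {α} | ¬ c α b}).Infinite := by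
      by_contra h
      push_neg at h
      apply hB'inf
      have : B \ {α} ⊆ {b ∈ B \ {α} | c α b} ∪ {b ∈ B \ {α} | ¬ c α b} := by
        intro b hb; by_cases hc : c α b
        · exact Or.inl ⟨hb, hc⟩
        · exact Or.inr ⟨hb, hc⟩
      exact (h.1.union h.2).subset this
    obtain ⟨B'', sval, hB''inf, hB''sub, hB''c⟩ :
        ∃ (B'' : Set ι) (sval : Bool), B''.Infinite ∧ B'' ⊆ B \ {α} ∧
          ∀ b ∈ B'', c α b ↔ sval = true := by
      rcases hsplit with h | h
      · exact ⟨_, true, h, fun b hb => hb.1, fun b hb => by simp [hb.2]⟩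
      · exact ⟨_, false, h, fun b hb => hb.1, fun b hb => by simp [hb.2]⟩
    refine ⟨Fin.snoc a α, Fin.snoc s sval, B'',
      fun b hb => hBA (hB''sub hb).1, hB''inf, ?_, ?_, ?_, ?_, ?_⟩
    · intro k
      refine Fin.lastCases ?_ ?_ k
      · rw [Fin.snoc_last]; exact hBA hαB
      · intro j; rw [Fin.snoc_castSucc]; exact haA j
    · intro k k'
      refine Fin.lastCases ?_ ?_ k'
      · intro hkk'
        obtain ⟨j, rfl⟩ := Fin.exists_castSucc_eq.2 (Fin.ne_last_of_lt hkk')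
        rw [Fin.snoc_last, Fin.snoc_castSucc]
        exact haB j α hαB
      · intro j' hkk'
        obtain ⟨j, rfl⟩ := Fin.exists_castSucc_eq.2
          (Fin.ne_last_of_lt (lt_of_lt_of_le hkk' (Fin.le_last j'.castSucc)))
        rw [Fin.snoc_castSucc, Fin.snoc_castSucc]
        exact hmono j j' (by exact_mod_cast hkk')
    · intro k b hb
      refine Fin.lastCases ?_ ?_ k
      · rw [Fin.snoc_last]; exact hB' b (hB''sub hb)
      · intro j; rw [Fin.snoc_castSucc]; exact haB j b (hB''sub hb).1
    · intro k k'
      refine Fin.lastCases ?_ ?_ k'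
      · intro hkk'
        obtain ⟨j, rfl⟩ := Fin.exists_castSucc_eq.2 (Fin.ne_last_of_lt hkk')
        rw [Fin.snoc_last, Fin.snoc_castSucc, Fin.snoc_castSucc]
        exact hcB j α hαB
      · intro j' hkk'
        obtain ⟨j, rfl⟩ := Fin.exists_castSucc_eq.2
          (Fin.ne_last_of_lt (lt_of_lt_of_le hkk' (Fin.le_last j'.castSucc)))
        rw [Fin.snoc_castSucc, Fin.snoc_castSucc, Fin.snoc_castSucc]
        exact hcs j j' (by exact_mod_cast hkk')
    · intro k b hb
      refine Fin.lastCases ?_ ?_ k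
      · rw [Fin.snoc_last, Fin.snoc_last]; exact hB''c b hb
      · intro j; rw [Fin.snoc_castSucc, Fin.snoc_castSucc]
        exact hcB j b (hB''sub hb).1

theorem stmt9 (K : Type*) [TopologicalSpace K] [CompactSpace K] [T2Space K]
    (hK : ¬ TopologicalSpace.MetrizableSpace K) :
    ∃ 𝓕 : Set C(K, ℝ),
      ¬ 𝓕.Countable ∧
      (∀ f ∈ 𝓕, ∀ x : K, f x ∈ Set.Icc (0 : ℝ) 1) ∧
      ∀ 𝓕' ⊆ 𝓕, ¬ 𝓕'.Countable →
        ∀ 𝓕'' ⊆ 𝓕', 𝓕''.Infinite →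
          ∀ n : ℕ, ∃ f : Fin n → C(K, ℝ), (∀ k, f k ∈ 𝓕'') ∧
            ∃ x : Fin (n + 1) → K,
              ∀ j j' : Fin (n + 1), j < j' →
                ∃ k : Fin n, (1 : ℝ) / 2 ≤ |f k (x j) - f k (x j')| := by
  obtain ⟨f, xp, yp, hspec⟩ := stmt9_construct hK
  have hf0 : ∀ i, f i (xp i) = 0 := fun i => (hspec i).1
  have hf1 : ∀ i, f i (yp i) = 1 := fun i => (hspec i).2.1
  have hIcc : ∀ i z, f i z ∈ Icc (0:ℝ) 1 := fun i => (hspec i).2.2.1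
  have hagree : ∀ j i, j < i → f j (xp i) = f j (yp i) := fun j i h => (hspec i).2.2.2 j h
  have finj : Function.Injective f := by
    have key : ∀ i j, i < j → f i ≠ f j := by
      intro i j hij hEq
      have h1 : f i (xp j) = f i (yp j) := hagree i j hij
      rw [hEq, hf0, hf1] at h1
      norm_num at h1
    intro i j hEq
    by_contra hne
    rcases lt_or_gt_of_ne hne with h | h
    · exact key i j h hEq
    · exact key j i h hEq.symm
  refine ⟨Set.range f, ?_, ?_, ?_⟩
  · intro hc
    haveI := hc.to_subtype
    haveI : Countable ((Cardinal.aleph.{0} 1).ord.ToType) :=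
      Countable.of_equiv _ (Equiv.ofInjective f finj).symm
    have h1 : Cardinal.mk ((Cardinal.aleph.{0} 1).ord.ToType) ≤ Cardinal.aleph0 := Cardinal.mk_le_aleph0
    rw [Cardinal.mk_toType, Cardinal.card_ord] at h1
    exact absurd h1 (not_le.2 Cardinal.aleph0_lt_aleph_one)
  · rintro g ⟨i, rfl⟩ z
    exact hIcc i z
  · intro 𝓕' h𝓕' hcnt' 𝓕'' hsub hinf n
    have hsub2 : 𝓕'' ⊆ Set.range f := fun g hg => h𝓕' (hsub hg)
    set A : Set ((Cardinal.aleph.{0} 1).ord.ToType) := f ⁻¹' 𝓕'' with hA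
    have hAinf : A.Infinite := by
      intro hfin
      apply hinf
      have himg : 𝓕'' ⊆ f '' A := by
        intro g hg
        obtain ⟨i, rfl⟩ := hsub2 hg
        exact ⟨i, hg, rfl⟩
      exact (hfin.image f).subset himg
    obtain ⟨a, s, B, hBA, hBinf, haA, hamono, haB, hcs, hcB⟩ :=
      stmt9_select (fun i j => (1:ℝ)/2 ≤ f i (xp j)) n A hAinf
    refine ⟨fun k => f (a k), fun k => haA k, ?_⟩
    -- key separation fact
    have sep : ∀ (k k' : Fin n), k < k' → ∀ z, (z = xp (a k') ∨ z = yp (a k')) →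
        (1:ℝ)/2 ≤ |f (a k) (if s k then xp (a k) else yp (a k)) - f (a k) z| := by
      intro k k' hkk' z hz
      have hvz : f (a k) z = f (a k) (xp (a k')) := by
        rcases hz with rfl | rfl
        · rfl
        · exact (hagree (a k) (a k') (hamono k k' hkk')).symm
      rw [hvz]
      set v := f (a k) (xp (a k')) with hv
      have hv0 : 0 ≤ v := (hIcc (a k) _).1
      have hv1 : v ≤ 1 := (hIcc (a k) _).2
      by_cases hs : s k = true
      · rw [if_pos hs, hf0]
        have h2 : (1:ℝ)/2 ≤ v := (hcs k k' hkk').2 hs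
        rw [zero_sub, abs_neg, abs_of_nonneg hv0]
        exact h2
      · rw [if_neg hs, hf1]
        have h2 : ¬ ((1:ℝ)/2 ≤ v) := fun hh => hs ((hcs k k' hkk').1 hh)
        push_neg at h2
        rw [abs_of_nonneg (by linarith)]
        linarith
    rcases Nat.eq_zero_or_pos n with rfl | hn
    · refine ⟨fun _ => xp (hBinf.nonempty.choose), ?_⟩
      intro j j' hjj'
      exfalso
      have h1 := j'.2
      rw [Fin.lt_def] at hjj'
      omega
    · -- n ≥ 1
      obtain ⟨m, rfl⟩ := Nat.exists_eq_succ_of_ne_zero (Nat.pos_iff_ne_zero.1 hn)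
      set L : Fin (m + 1) := Fin.last m with hL
      refine ⟨Fin.snoc (fun k : Fin (m+1) => if s k then xp (a k) else yp (a k))
        (if s L then yp (a L) else xp (a L)), ?_⟩
      intro j j'
      refine Fin.lastCases ?_ ?_ j'
      · intro hjj'
        obtain ⟨j₀, rfl⟩ := Fin.exists_castSucc_eq.2 (Fin.ne_last_of_lt hjj')
        rw [Fin.snoc_last, Fin.snoc_castSucc]
        by_cases hjL : j₀ = L
        · subst hjL
          refine ⟨L, ?_⟩
          by_cases hs : s L = true
          · rw [if_pos hs, if_pos hs, hf0, hf1]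
            norm_num
          · rw [if_neg hs, if_neg hs, hf0, hf1]
            norm_num
        · have hjlt : j₀ < L := lt_of_le_of_ne (Fin.le_last j₀) hjL
          refine ⟨j₀, sep j₀ L hjlt _ ?_⟩
          by_cases hs : s L = true
          · rw [if_pos hs]; exact Or.inr rfl
          · rw [if_neg hs]; exact Or.inl rfl
      · intro j'' hjj'
        obtain ⟨j₀, rfl⟩ := Fin.exists_castSucc_eq.2
          (Fin.ne_last_of_lt (lt_of_lt_of_le hjj' (Fin.le_last j''.castSucc)))
        rw [Fin.snoc_castSucc, Fin.snoc_castSucc]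
        have hlt : j₀ < j'' := by exact_mod_cast hjj'
        refine ⟨j₀, sep j₀ j'' hlt _ ?_⟩
        by_cases hs : s j'' = true
        · rw [if_pos hs]; exact Or.inl rfl
        · rw [if_neg hs]; exact Or.inr rfl
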